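/- For every d > 1, with ρ = ρ_{2,d} = sup{x ∈ [0,1] : x = 1 - exp(-d x)}, one has ρ - dρ + (1/2) d ρ^2 < 0. -/

import Mathlib

private lemma key_exp_ineq : ∀ t : ℝ, 0 < t → (2 - t) * Real.exp t < 2 + t := by
  intro t ht
  set h : ℝ → ℝ := fun t => 2 + t - (2 - t) * Real.exp t with hh
  have hderiv : ∀ x : ℝ, HasDerivAt h (1 - (1 - x) * Real.exp x) x := by
    intro x
    have h1 := ((hasDerivAt_const x (2:ℝ)).fun_sub (hasDerivAt_id x)).fun_mul (Real.hasDerivAt_exp x)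
    simp only [id_eq] at h1
    have h2 : HasDerivAt (fun t : ℝ => 2 + t) 1 x := by
      simpa using (hasDerivAt_const x (2:ℝ)).fun_add (hasDerivAt_id x)
    have := h2.fun_sub h1
    exact this.congr_deriv (by ring)
  have hmono : StrictMonoOn h (Set.Ici 0) := by
    apply strictMonoOn_of_deriv_pos (convex_Ici 0)
    · exact (Continuous.continuousOn (by continuity))
    · intro x hx
      rw [interior_Ici] at hx
      rw [(hderiv x).deriv]
      have hxe : (1 - x) * Real.exp x < 1 := by
        have h1x : 1 - x < Real.exp (-x) := by
          have := Real.add_one_lt_exp (x := -x) (neg_ne_zero.mpr (ne_of_gt (Set.mem_Ioi.mp hx)))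
          linarith
        have hepos := Real.exp_pos x
        calc (1 - x) * Real.exp x < Real.exp (-x) * Real.exp x :=
              by exact mul_lt_mul_of_pos_right h1x hepos
          _ = 1 := by rw [← Real.exp_add]; simp
      linarith
  have h0 : h 0 = 0 := by simp [hh]
  have := hmono (Set.self_mem_Ici) (Set.mem_Ici.mpr ht.le) ht
  rw [h0] at this
  simp only [hh] at this
  linarith

theorem rho_two_ineq (d : ℝ) (hd : 1 < d) (ρ : ℝ)
    (hρ : ρ = sSup {x : ℝ | x ∈ Set.Icc (0 : ℝ) 1 ∧ x = 1 - Real.exp (-(d * x))}) :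
    ρ - d * ρ + (1 / 2) * d * ρ ^ 2 < 0 := by
  set S : Set ℝ := {x : ℝ | x ∈ Set.Icc (0 : ℝ) 1 ∧ x = 1 - Real.exp (-(d * x))} with hS
  have hd0 : (0:ℝ) < d := by linarith
  have hS0 : (0:ℝ) ∈ S := by
    constructor
    · exact Set.mem_Icc.mpr ⟨le_refl 0, zero_le_one⟩
    · simp
  have hne : S.Nonempty := ⟨0, hS0⟩
  have hclosed : IsClosed S := by
    have : S = Set.Icc (0:ℝ) 1 ∩ {x : ℝ | x = 1 - Real.exp (-(d * x))} := rfl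
    rw [this]
    exact isClosed_Icc.inter (isClosed_eq continuous_id (by continuity))
  have hsub : S ⊆ Set.Icc (0:ℝ) 1 := fun x hx => hx.1
  have hcompact : IsCompact S := isCompact_Icc.of_isClosed_subset hclosed hsub
  have hbdd : BddAbove S := ⟨1, fun x hx => (hx.1).2⟩
  have hρS : ρ ∈ S := hρ ▸ hcompact.sSup_mem hne
  obtain ⟨⟨hρ0, hρ1⟩, hfix⟩ := hρS
  -- find a positive element of S via IVT
  set x₀ : ℝ := (d - 1) / d ^ 2 with hx₀
  have hx₀pos : 0 < x₀ := div_pos (by linarith) (by positivity)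
  have hx₀lt1 : x₀ < 1 := by
    rw [div_lt_one (by positivity)]
    nlinarith
  set g : ℝ → ℝ := fun x => 1 - Real.exp (-(d * x)) - x with hg
  have hg1 : g 1 < 0 := by
    have := Real.exp_pos (-(d * 1))
    simp only [hg]
    linarith
  have hgx₀ : 0 < g x₀ := by
    -- exp(-(d*x₀)) < 1/(1 + d*x₀) < 1 - x₀
    have ht₀ : d * x₀ = (d - 1) / d := by
      field_simp [hx₀]
      rw [hx₀]; field_simp
    have ht₀pos : 0 < d * x₀ := by positivity
    have h1 : Real.exp (-(d * x₀)) < 1 / (1 + d * x₀) := by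
      have h2 : 1 + d * x₀ < Real.exp (d * x₀) := by
        have := Real.add_one_lt_exp (x := d * x₀) (ne_of_gt ht₀pos)
        linarith
      rw [Real.exp_neg, inv_eq_one_div, div_lt_div_iff₀ (Real.exp_pos _) (by positivity)]
      nlinarith
    have h3 : 1 / (1 + d * x₀) < 1 - x₀ := by
      rw [div_lt_iff₀ (by positivity)]
      have hd2 : (0:ℝ) < d ^ 2 := by positivity
      have : (1 - x₀) * (1 + d * x₀) = 1 + (d-1)^3 / d^3 := by
        rw [ht₀, hx₀]
        field_simp
        ring
      rw [this]
      have : 0 < (d-1)^3 / d^3 := div_pos (pow_pos (by linarith) 3) (by positivity)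
      linarith
    simp only [hg]
    linarith
  have hgcont : Continuous g :=
    (continuous_const.sub (Real.continuous_exp.comp
      (continuous_const.mul continuous_id).neg)).sub continuous_id
  have hcont : ContinuousOn g (Set.Icc x₀ 1) := hgcont.continuousOn
  have hivt := intermediate_value_Icc' hx₀lt1.le hcont
  have h0mem : (0:ℝ) ∈ Set.Icc (g 1) (g x₀) := ⟨hg1.le, hgx₀.le⟩
  obtain ⟨c, hcmem, hgc⟩ := hivt h0mem
  have hcS : c ∈ S := by
    refine ⟨⟨le_trans hx₀pos.le hcmem.1, hcmem.2⟩, ?_⟩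
    simp only [hg] at hgc
    linarith
  have hρpos : 0 < ρ := lt_of_lt_of_le (lt_of_lt_of_le hx₀pos hcmem.1)
    (hρ ▸ le_csSup hbdd hcS)
  -- now the main inequality
  have hE : Real.exp (-(d * ρ)) = 1 - ρ := by linarith
  have h1ρ : 0 < 1 - ρ := by rw [← hE]; exact Real.exp_pos _
  have hkey := key_exp_ineq (d * ρ) (by positivity)
  have hEinv : Real.exp (d * ρ) = (1 - ρ)⁻¹ := by
    rw [← hE, ← Real.exp_neg]; simp
  rw [hEinv] at hkey
  have hkey2 : 2 - d * ρ < (2 + d * ρ) * (1 - ρ) := by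
    have := mul_lt_mul_of_pos_right hkey h1ρ
    rw [mul_assoc, inv_mul_cancel₀ (ne_of_gt h1ρ), mul_one] at this
    linarith
  nlinarith [hρpos, hkey2]
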